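/- For all integers n ≥ m ≥ 0, the quantity B_{n,m} = (2n)!·m! / (n!·(2m)!·(n-m)!) is an integer. -/

import Mathlib

open Nat

lemma key_div_ineq (q n m : ℕ) (hq : 0 < q) (h : m ≤ n) :
    n / q + 2 * m / q + (n - m) / q ≤ 2 * n / q + m / q := by
  obtain ⟨a, r, hrq, rfl⟩ : ∃ a r, r < q ∧ n = q * a + r :=
    ⟨n / q, n % q, Nat.mod_lt _ hq, (Nat.div_add_mod n q).symm⟩
  obtain ⟨b, s, hsq, rfl⟩ : ∃ b s, s < q ∧ m = q * b + s :=
    ⟨m / q, m % q, Nat.mod_lt _ hq, (Nat.div_add_mod m q).symm⟩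
  have e1 : (q * a + r) / q = a := by
    rw [Nat.mul_add_div hq, Nat.div_eq_of_lt hrq, Nat.add_zero]
  have e2 : (q * b + s) / q = b := by
    rw [Nat.mul_add_div hq, Nat.div_eq_of_lt hsq, Nat.add_zero]
  have e3 : 2 * (q * a + r) / q = 2 * a + 2 * r / q := by
    rw [show 2 * (q * a + r) = q * (2 * a) + 2 * r by ring, Nat.mul_add_div hq]
  have e4 : 2 * (q * b + s) / q = 2 * b + 2 * s / q := by
    rw [show 2 * (q * b + s) = q * (2 * b) + 2 * s by ring, Nat.mul_add_div hq]
  have hba : b ≤ a := by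
    by_contra hc
    have h2 : q * (a + 1) ≤ q * b := Nat.mul_le_mul_left q (by omega)
    rw [Nat.mul_add, Nat.mul_one] at h2
    omega
  have hqba : q * b ≤ q * a := Nat.mul_le_mul_left q hba
  rcases le_or_gt s r with hsr | hrs
  · have hdec : q * a + r - (q * b + s) = q * (a - b) + (r - s) := by
      have := Nat.mul_sub q a b
      omega
    have e5 : (q * a + r - (q * b + s)) / q = a - b := by
      rw [hdec, Nat.mul_add_div hq, Nat.div_eq_of_lt (by omega), Nat.add_zero]
    have hdd : 2 * s / q ≤ 2 * r / q := Nat.div_le_div_right (by omega)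
    rw [e1, e2, e3, e4, e5]
    clear e1 e2 e3 e4 e5 hdec hqba h hrq hsq hq hsr
    generalize 2 * s / q = u at hdd ⊢
    generalize 2 * r / q = v at hdd ⊢
    omega
  · have hab : b < a := by
      by_contra hc
      have hba' : a = b := by omega
      have : q * a = q * b := by rw [hba']
      omega
    have h1 : q * (a - b - 1) = q * a - q * b - q := by
      rw [Nat.mul_sub, Nat.mul_sub, Nat.mul_one]
    have h2 : q * b + q ≤ q * a := by
      have h3 : q * (b + 1) ≤ q * a := Nat.mul_le_mul_left q (by omega)
      rw [Nat.mul_add, Nat.mul_one] at h3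
      omega
    have hdec : q * a + r - (q * b + s) = q * (a - b - 1) + (q + r - s) := by omega
    have e5 : (q * a + r - (q * b + s)) / q = a - b - 1 := by
      rw [hdec, Nat.mul_add_div hq, Nat.div_eq_of_lt (by omega), Nat.add_zero]
    have h2s : 2 * s / q ≤ 1 := by
      have : 2 * s / q < 2 := Nat.div_lt_of_lt_mul (by omega)
      omega
    rw [e1, e2, e3, e4, e5]
    clear e1 e2 e3 e4 e5 hdec h1 h2 hqba h hrq hsq hq hrs
    generalize 2 * s / q = u at h2s ⊢
    generalize 2 * r / q = v
    omega

lemma padic_ineq (p : ℕ) (hp : p.Prime) (n m : ℕ) (h : m ≤ n) :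
    padicValNat p (n !) + padicValNat p ((2 * m)!) + padicValNat p ((n - m)!) ≤
      padicValNat p ((2 * n)!) + padicValNat p (m !) := by
  haveI : Fact p.Prime := ⟨hp⟩
  set b := log p (2 * n) + 1 with hb
  have hlog : ∀ k : ℕ, k ≤ 2 * n → log p k < b := by
    intro k hk
    have := Nat.log_mono_right (b := p) hk
    omega
  rw [padicValNat_factorial (hlog n (by omega)),
    padicValNat_factorial (hlog (2 * m) (by omega)),
    padicValNat_factorial (hlog (n - m) (by omega)),
    padicValNat_factorial (hlog (2 * n) (by omega)),
    padicValNat_factorial (hlog m (by omega))]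
  rw [← Finset.sum_add_distrib, ← Finset.sum_add_distrib, ← Finset.sum_add_distrib]
  apply Finset.sum_le_sum
  intro i _
  exact key_div_ineq (p ^ i) n m (Nat.pow_pos (n := i) hp.pos) h

theorem B_integral (n m : ℕ) (h : m ≤ n) :
    Nat.factorial n * Nat.factorial (2 * m) * Nat.factorial (n - m) ∣
      Nat.factorial (2 * n) * Nat.factorial m := by
  have h1 : n ! * (2 * m)! * (n - m)! ≠ 0 := by positivity
  have h2 : (2 * n)! * m ! ≠ 0 := by positivity
  rw [← Nat.factorization_le_iff_dvd h1 h2]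
  intro p
  by_cases hp : p.Prime
  · haveI : Fact p.Prime := ⟨hp⟩
    rw [Nat.factorization_mul (by positivity) (by positivity),
      Nat.factorization_mul (by positivity) (by positivity),
      Nat.factorization_mul (by positivity) (by positivity)]
    simp only [Finsupp.coe_add, Pi.add_apply]
    rw [Nat.factorization_def _ hp, Nat.factorization_def _ hp, Nat.factorization_def _ hp,
      Nat.factorization_def _ hp, Nat.factorization_def _ hp]
    exact padic_ineq p hp n m h
  · simp [Nat.factorization_eq_zero_of_not_prime _ hp]
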